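/- Let G be a finite group, π a set of primes with O_π(G) ≠ 1, and let f be any real-valued function on the set of subgroups of G. Then the alternating sum over all chains C of π-subgroups of G of (-1)^{|C|} · |G_C| · f(G_C) equals 0. -/

import Mathlib

open scoped Pointwise Classical

section Aux

variable {G : Type*} [Group G]

/-- Membership in the normalizer via the pointwise conjugation action. -/
lemma mem_normalizer_iff_conj_smul {H : Subgroup G} {g : G} :
    g ∈ Subgroup.normalizer (H : Set G) ↔ MulAut.conj g • H = H := by
  rw [Subgroup.mem_normalizer_iff'']
  constructor
  · intro hg
    ext x
    rw [Subgroup.mem_pointwise_smul_iff_inv_smul_mem]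
    simp only [MulAut.smul_def, MulAut.conj_inv_apply]
    exact (hg x).symm
  · intro hg x
    conv_lhs => rw [← hg]
    rw [Subgroup.mem_pointwise_smul_iff_inv_smul_mem]
    simp [MulAut.smul_def]

lemma mem_normalizer_sup_of_normal {R P : Subgroup G} (hR : R.Normal) {g : G}
    (hg : g ∈ Subgroup.normalizer (P : Set G)) : g ∈ Subgroup.normalizer ((R ⊔ P : Subgroup G) : Set G) := by
  haveI := hR
  rw [mem_normalizer_iff_conj_smul] at hg ⊢
  rw [Subgroup.smul_sup, hg, Subgroup.Normal.conj_smul_eq_self]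

lemma card_sup_dvd_of_normal [Finite G] {R P : Subgroup G} (hR : R.Normal) :
    Nat.card ↥(R ⊔ P) ∣ Nat.card R * Nat.card P := by
  haveI := hR
  have h1 : (R.subgroupOf (R ⊔ P)).index * Nat.card (R.subgroupOf (R ⊔ P))
      = Nat.card ↥(R ⊔ P) := Subgroup.index_mul_card _
  have h2 : Nat.card (R.subgroupOf (R ⊔ P)) = Nat.card R :=
    Nat.card_congr (Subgroup.subgroupOfEquivOfLe le_sup_left).toEquiv
  have h3 : R.relIndex (R ⊔ P) = R.relIndex P := Subgroup.relIndex_sup_left P R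
  have h4 : R.relIndex P ∣ Nat.card P := Subgroup.index_dvd_card _
  have : Nat.card ↥(R ⊔ P) = R.relIndex P * Nat.card R := by
    rw [← h1, h2, ← h3]; rfl
  rw [this, mul_comm (Nat.card R)]
  exact Nat.mul_dvd_mul h4 dvd_rfl

/-- The greatest element of a finset (junk value `⊥` if none exists). -/
noncomputable def greatestOf (T : Finset (Subgroup G)) : Subgroup G :=
  if h : ∃ P, P ∈ T ∧ ∀ x ∈ T, x ≤ P then h.choose else ⊥

lemma greatestOf_spec {T : Finset (Subgroup G)}
    (hc : IsChain (· ≤ ·) (T : Set (Subgroup G))) (hne : T.Nonempty) :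
    greatestOf T ∈ T ∧ ∀ x ∈ T, x ≤ greatestOf T := by
  have h : ∃ P, P ∈ T ∧ ∀ x ∈ T, x ≤ P := by
    obtain ⟨a, ha, hmax⟩ := Set.Finite.exists_maximalFor id (T : Set (Subgroup G))
      (T.finite_toSet) (by exact_mod_cast hne)
    refine ⟨a, by exact_mod_cast ha, fun x hx => ?_⟩
    rcases eq_or_ne x a with rfl | hxa
    · exact le_rfl
    · rcases hc (by exact_mod_cast hx) ha hxa with h' | h'
      · exact h'
      · exact (hmax (by exact_mod_cast hx) h')
  rw [greatestOf, dif_pos h]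
  exact h.choose_spec

end Aux


/-- `n` is a π-number: all prime divisors lie in π. -/
def IsPiNumber (π : Set ℕ) (n : ℕ) : Prop := ∀ p : ℕ, p.Prime → p ∣ n → p ∈ π

/-- A π-subgroup: a subgroup whose order is a π-number. -/
def IsPiSubgroup (π : Set ℕ) {G : Type*} [Group G] (P : Subgroup G) : Prop :=
  IsPiNumber π (Nat.card P)

/-- A chain 1 = P₀ < P₁ < … < Pₙ of π-subgroups of `G`, encoded by its (totally
ordered, hence strictly increasing) finite set of members, which contains ⊥. -/
structure PiChain (π : Set ℕ) (G : Type*) [Group G] where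
  carrier : Finset (Subgroup G)
  bot_mem : ⊥ ∈ carrier
  isChain : IsChain (· ≤ ·) (carrier : Set (Subgroup G))
  pi : ∀ P ∈ carrier, IsPiSubgroup π P

/-- The length |C| = n of a chain 1 = P₀ < … < Pₙ. -/
def PiChain.len {π : Set ℕ} {G : Type*} [Group G] (C : PiChain π G) : ℕ :=
  C.carrier.card - 1

/-- The stabilizer G_C = ⋂ᵢ N_G(Pᵢ) of a chain. -/
def PiChain.stab {π : Set ℕ} {G : Type*} [Group G] (C : PiChain π G) : Subgroup G :=
  ⨅ P ∈ C.carrier, Subgroup.normalizer P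

instance {π : Set ℕ} {G : Type*} [Group G] [Finite G] : Finite (PiChain π G) := by
  have : Fintype G := Fintype.ofFinite G
  classical
  apply Finite.of_injective (fun C : PiChain π G => C.carrier)
  intro C D h
  cases C; cases D; simpa using h

/-- O_π(G): the largest normal π-subgroup of `G`. -/
def piCore (π : Set ℕ) (G : Type*) [Group G] : Subgroup G :=
  ⨆ P ∈ {P : Subgroup G | P.Normal ∧ IsPiSubgroup π P}, P

section Main

variable {π : Set ℕ} {G : Type*} [Group G] [Finite G]

lemma PiChain.ext' {C D : PiChain π G} (h : C.carrier = D.carrier) : C = D := by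
  cases C; cases D; simpa using h

variable (R : Subgroup G)

/-- The members of the chain not containing `R`. -/
noncomputable def cT (C : PiChain π G) : Finset (Subgroup G) :=
  C.carrier.filter (fun x => ¬ R ≤ x)

/-- The largest member of the chain not containing `R`. -/
noncomputable def cP (C : PiChain π G) : Subgroup G := greatestOf (cT R C)

/-- `R ⊔ cP`, the element toggled by the involution. -/
noncomputable def cQ (C : PiChain π G) : Subgroup G := R ⊔ cP R C

variable {R}

lemma cT_isChain (C : PiChain π G) : IsChain (· ≤ ·) ((cT R C : Finset (Subgroup G)) : Set (Subgroup G)) :=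
  C.isChain.mono (by exact_mod_cast Finset.filter_subset _ _)

lemma bot_mem_cT (hRne : R ≠ ⊥) (C : PiChain π G) : ⊥ ∈ cT R C := by
  rw [cT, Finset.mem_filter]
  exact ⟨C.bot_mem, by simpa [le_bot_iff] using hRne⟩

lemma cP_spec (hRne : R ≠ ⊥) (C : PiChain π G) :
    cP R C ∈ cT R C ∧ ∀ x ∈ cT R C, x ≤ cP R C :=
  greatestOf_spec (cT_isChain C) ⟨⊥, bot_mem_cT hRne C⟩

lemma cP_mem (hRne : R ≠ ⊥) (C : PiChain π G) : cP R C ∈ C.carrier :=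
  (Finset.mem_filter.mp (cP_spec hRne C).1).1

lemma not_le_cP (hRne : R ≠ ⊥) (C : PiChain π G) : ¬ R ≤ cP R C :=
  (Finset.mem_filter.mp (cP_spec hRne C).1).2

lemma le_cP (hRne : R ≠ ⊥) (C : PiChain π G) {x : Subgroup G}
    (hx : x ∈ C.carrier) (hR : ¬ R ≤ x) : x ≤ cP R C :=
  (cP_spec hRne C).2 x (Finset.mem_filter.mpr ⟨hx, hR⟩)

lemma cP_ne_cQ (hRne : R ≠ ⊥) (C : PiChain π G) : cP R C ≠ cQ R C := by
  intro hEq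
  exact not_le_cP hRne C (hEq ▸ (le_sup_left : R ≤ cQ R C))

lemma cP_lt_cQ (hRne : R ≠ ⊥) (C : PiChain π G) : cP R C < cQ R C :=
  lt_of_le_of_ne le_sup_right (cP_ne_cQ hRne C)

lemma cQ_ne_bot (hRne : R ≠ ⊥) (C : PiChain π G) : cQ R C ≠ ⊥ := by
  intro hEq
  exact hRne (le_bot_iff.mp (hEq ▸ (le_sup_left : R ≤ cQ R C)))

lemma cQ_comparable (hRne : R ≠ ⊥) (C : PiChain π G) {x : Subgroup G}
    (hx : x ∈ C.carrier) : x ≤ cQ R C ∨ cQ R C ≤ x := by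
  by_cases hR : R ≤ x
  · rcases eq_or_ne x (cP R C) with rfl | hne
    · exact Or.inl le_sup_right
    · rcases C.isChain (by exact_mod_cast hx) (by exact_mod_cast cP_mem hRne C) hne with h' | h'
      · exact Or.inl (h'.trans le_sup_right)
      · exact Or.inr (sup_le hR h')
  · exact Or.inl ((le_cP hRne C hx hR).trans le_sup_right)

lemma cQ_pi (hRn : R.Normal) (hRpi : IsPiSubgroup π R) (hRne : R ≠ ⊥) (C : PiChain π G) :
    IsPiSubgroup π (cQ R C) := by
  intro p hp hdvd
  have hdvd' : p ∣ Nat.card R * Nat.card (cP R C) :=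
    hdvd.trans (card_sup_dvd_of_normal hRn)
  rcases hp.dvd_mul.mp hdvd' with h' | h'
  · exact hRpi p hp h'
  · exact C.pi _ (cP_mem hRne C) p hp h'

variable (R)

/-- The involution on chains: toggle the element `cQ = R ⊔ cP`. -/
noncomputable def sigmaChain (hRn : R.Normal) (hRpi : IsPiSubgroup π R) (hRne : R ≠ ⊥)
    (C : PiChain π G) : PiChain π G where
  carrier := if cQ R C ∈ C.carrier then C.carrier.erase (cQ R C) else insert (cQ R C) C.carrier
  bot_mem := by
    split
    · exact Finset.mem_erase.mpr ⟨(cQ_ne_bot hRne C).symm, C.bot_mem⟩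
    · exact Finset.mem_insert_of_mem C.bot_mem
  isChain := by
    split
    · exact C.isChain.mono (by exact_mod_cast Finset.erase_subset _ _)
    · rw [Finset.coe_insert]
      refine C.isChain.insert ?_
      intro x hx _
      exact (cQ_comparable hRne C (by exact_mod_cast hx)).symm
  pi := by
    split
    · intro P hP
      exact C.pi P (Finset.mem_of_mem_erase hP)
    · intro P hP
      rcases Finset.mem_insert.mp hP with rfl | hP'
      · exact cQ_pi hRn hRpi hRne C
      · exact C.pi P hP'

variable {R}
variable (hRn : R.Normal) (hRpi : IsPiSubgroup π R) (hRne : R ≠ ⊥)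

lemma sigma_carrier (C : PiChain π G) :
    (sigmaChain R hRn hRpi hRne C).carrier =
      if cQ R C ∈ C.carrier then C.carrier.erase (cQ R C) else insert (cQ R C) C.carrier := rfl

lemma cT_sigma (C : PiChain π G) : cT R (sigmaChain R hRn hRpi hRne C) = cT R C := by
  have hRQ : R ≤ cQ R C := le_sup_left
  rw [cT, cT, sigma_carrier]
  by_cases hmem : cQ R C ∈ C.carrier
  · rw [if_pos hmem]
    ext x
    simp only [Finset.mem_filter, Finset.mem_erase]
    constructor
    · rintro ⟨⟨-, hx⟩, hnle⟩; exact ⟨hx, hnle⟩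
    · rintro ⟨hx, hnle⟩
      exact ⟨⟨fun hEq => hnle (hEq ▸ hRQ), hx⟩, hnle⟩
  · rw [if_neg hmem]
    ext x
    simp only [Finset.mem_filter, Finset.mem_insert]
    constructor
    · rintro ⟨rfl | hx, hnle⟩
      · exact absurd hRQ hnle
      · exact ⟨hx, hnle⟩
    · rintro ⟨hx, hnle⟩; exact ⟨Or.inr hx, hnle⟩

lemma cP_sigma (C : PiChain π G) : cP R (sigmaChain R hRn hRpi hRne C) = cP R C := by
  rw [cP, cP, cT_sigma]

lemma cQ_sigma (C : PiChain π G) : cQ R (sigmaChain R hRn hRpi hRne C) = cQ R C := by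
  rw [cQ, cQ, cP_sigma]

lemma sigma_sigma (C : PiChain π G) :
    sigmaChain R hRn hRpi hRne (sigmaChain R hRn hRpi hRne C) = C := by
  apply PiChain.ext'
  have hQ : cQ R (sigmaChain R hRn hRpi hRne C) = cQ R C := cQ_sigma hRn hRpi hRne C
  show (if cQ R (sigmaChain R hRn hRpi hRne C) ∈ (sigmaChain R hRn hRpi hRne C).carrier then _ else _) = C.carrier
  rw [hQ]
  by_cases hmem : cQ R C ∈ C.carrier
  · have h1 : (sigmaChain R hRn hRpi hRne C).carrier = C.carrier.erase (cQ R C) := by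
      rw [sigmaChain]; exact if_pos hmem
    rw [h1, if_neg (Finset.notMem_erase _ _), Finset.insert_erase hmem]
  · have h1 : (sigmaChain R hRn hRpi hRne C).carrier = insert (cQ R C) C.carrier := by
      rw [sigmaChain]; exact if_neg hmem
    rw [h1, if_pos (Finset.mem_insert_self _ _), Finset.erase_insert hmem]

lemma mem_stab_iff (C : PiChain π G) {g : G} :
    g ∈ C.stab ↔ ∀ x ∈ C.carrier, g ∈ Subgroup.normalizer (x : Set G) := by
  simp [PiChain.stab, Subgroup.mem_iInf]

lemma stab_sigma (C : PiChain π G) : (sigmaChain R hRn hRpi hRne C).stab = C.stab := by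
  have key : ∀ g : G, g ∈ Subgroup.normalizer (cP R C : Set G) → g ∈ Subgroup.normalizer (cQ R C : Set G) := fun g hg =>
    mem_normalizer_sup_of_normal hRn hg
  ext g
  rw [mem_stab_iff, mem_stab_iff]
  show (∀ x ∈ (if cQ R C ∈ C.carrier then C.carrier.erase (cQ R C) else insert (cQ R C) C.carrier),
      g ∈ Subgroup.normalizer (x : Set G)) ↔ _
  by_cases hmem : cQ R C ∈ C.carrier
  · rw [if_pos hmem]
    constructor
    · intro hg x hx
      rcases eq_or_ne x (cQ R C) with rfl | hne
      · exact key g (hg _ (Finset.mem_erase.mpr ⟨cP_ne_cQ hRne C, cP_mem hRne C⟩))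
      · exact hg x (Finset.mem_erase.mpr ⟨hne, hx⟩)
    · intro hg x hx
      exact hg x (Finset.mem_of_mem_erase hx)
  · rw [if_neg hmem]
    constructor
    · intro hg x hx
      exact hg x (Finset.mem_insert_of_mem hx)
    · intro hg x hx
      rcases Finset.mem_insert.mp hx with rfl | hx'
      · exact key g (hg _ (cP_mem hRne C))
      · exact hg x hx'

lemma card_pos' (C : PiChain π G) : 1 ≤ C.carrier.card :=
  Finset.card_pos.mpr ⟨⊥, C.bot_mem⟩

lemma len_sigma (C : PiChain π G) :
    (sigmaChain R hRn hRpi hRne C).len = C.len + 1 ∨ C.len = (sigmaChain R hRn hRpi hRne C).len + 1 := by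
  by_cases hmem : cQ R C ∈ C.carrier
  · right
    have h2 : 2 ≤ C.carrier.card :=
      Finset.one_lt_card.mpr ⟨⊥, C.bot_mem, cQ R C, hmem, (cQ_ne_bot hRne C).symm⟩
    rw [PiChain.len, PiChain.len, sigma_carrier, if_pos hmem, Finset.card_erase_of_mem hmem]
    omega
  · left
    have h1 := card_pos' C
    rw [PiChain.len, PiChain.len, sigma_carrier, if_neg hmem, Finset.card_insert_of_notMem hmem]
    omega

lemma sigma_ne (C : PiChain π G) : sigmaChain R hRn hRpi hRne C ≠ C := by
  intro hEq
  have := len_sigma hRn hRpi hRne C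
  rw [hEq] at this
  omega

end Main

/-- Lemma 2.1: if O_π(G) ≠ 1 then Σ_C (-1)^{|C|} |G_C| f(G_C) = 0 for every
real-valued function f on the subgroups of G. -/
theorem alternating_sum_vanishes (π : Set ℕ) (hπ : ∀ p ∈ π, p.Prime)
    (G : Type*) [Group G] [Finite G] (h : piCore π G ≠ ⊥)
    (f : Subgroup G → ℝ) :
    ∑ᶠ C : PiChain π G,
      ((-1 : ℝ) ^ C.len * (Nat.card ↥C.stab : ℝ) * f C.stab) = 0 := by
    classical
  obtain ⟨R, hRn, hRpi, hRne⟩ : ∃ R : Subgroup G, R.Normal ∧ IsPiSubgroup π R ∧ R ≠ ⊥ := by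
    by_contra hcon
    push_neg at hcon
    apply h
    rw [piCore, eq_bot_iff]
    apply iSup₂_le
    intro P hP
    exact le_of_eq (hcon P hP.1 hP.2)
  haveI : Fintype (PiChain π G) := Fintype.ofFinite _
  rw [finsum_eq_sum_of_fintype]
  apply Finset.sum_ninvolution (sigmaChain R hRn hRpi hRne)
  · intro C
    rw [stab_sigma hRn hRpi hRne C]
    rcases len_sigma hRn hRpi hRne C with hl | hl <;> rw [hl] <;> ring
  · intro C _
    exact sigma_ne hRn hRpi hRne C
  · intro C
    exact Finset.mem_univ _
  · intro C
    exact sigma_sigma hRn hRpi hRne C
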